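/- arXiv:2206.07995 — 2 statements merged into one kernel-verified Lean document; each statement's English description precedes it below -/
import Mathlib

section
/- Let q ≥ 2 and n ≥ 2 be integers. For x drawn uniformly at random from Z_q^n, the expected value of the sum of the squared lengths of the maximal alternating segments of x satisfies E_x[ Σ_{i=1}^{A(x)} s_i² ] = n(4q²−3q+2)/q² + (6q−4)/q² − 4 − (2/(q−1))·(1 − 1/q^{n−1}). -/
open scoped Classical

/-- Length of a longest common subsequence of two lists. -/
noncomputable def lcsLen {α : Type*} (x y : List α) : ℕ :=
  sSup {k | ∃ z : List α, z.Sublist x ∧ z.Sublist y ∧ z.length = k}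

/-- The fixed-length Levenshtein (FLL) distance on `Fin n → Fin q`:
`d_ℓ(x,y) = n - LCS(x,y)`. -/
noncomputable def fllDist {q n : ℕ} (x y : Fin n → Fin q) : ℕ :=
  n - lcsLen (List.ofFn x) (List.ofFn y)

/-- The FLL `t`-ball centered at `x`. -/
noncomputable def fllBall (q n t : ℕ) (x : Fin n → Fin q) : Finset (Fin n → Fin q) :=
  Finset.univ.filter fun y => fllDist x y ≤ t

/-- The Hamming `t`-ball centered at `x`. -/
noncomputable def hammingBall (q n t : ℕ) (x : Fin n → Fin q) : Finset (Fin n → Fin q) :=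
  Finset.univ.filter fun y => hammingDist x y ≤ t

/-- The number of runs (maximal blocks of consecutive equal symbols) of a list. -/
def numRuns {α : Type*} [DecidableEq α] : List α → ℕ
  | [] => 0
  | [_] => 1
  | a :: b :: l => (if a = b then 0 else 1) + numRuns (b :: l)

/-- A list is alternating (of shape `σ σ' σ σ' ⋯` with `σ ≠ σ'`): adjacent entries
differ and entries two apart agree. -/
def IsAltList {α : Type*} (l : List α) : Prop :=
  (∀ i, ∀ h : i + 1 < l.length, l.get ⟨i, by omega⟩ ≠ l.get ⟨i + 1, h⟩) ∧
  (∀ i, ∀ h : i + 2 < l.length, l.get ⟨i, by omega⟩ = l.get ⟨i + 2, h⟩)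

/-- The contiguous block `l_i ⋯ l_j` of a list (0-indexed, inclusive). -/
def blockSeg {α : Type*} (l : List α) (i j : ℕ) : List α := (l.drop i).take (j + 1 - i)

/-- `(i, j)` indexes a maximal alternating segment of `l`. -/
def IsMaxAltSeg {α : Type*} (l : List α) (i j : ℕ) : Prop :=
  i ≤ j ∧ j < l.length ∧ IsAltList (blockSeg l i j) ∧
    (i = 0 ∨ ¬ IsAltList (blockSeg l (i - 1) j)) ∧
    (j = l.length - 1 ∨ ¬ IsAltList (blockSeg l i (j + 1)))

/-- The index pairs of the maximal alternating segments of `l`. -/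
noncomputable def maxAltSegs {α : Type*} (l : List α) : Finset (ℕ × ℕ) :=
  (Finset.range l.length ×ˢ Finset.range l.length).filter fun p => IsMaxAltSeg l p.1 p.2

/-- `A(x)`: the number of maximal alternating segments. -/
noncomputable def numAltSegs {α : Type*} (l : List α) : ℕ := (maxAltSegs l).card

/-- The sum `Σ s_i` of the lengths of the maximal alternating segments. -/
noncomputable def segLenSum {α : Type*} (l : List α) : ℕ :=
  ∑ p ∈ maxAltSegs l, (p.2 + 1 - p.1)

/-- The sum `Σ s_i²` of the squared lengths of the maximal alternating segments. -/
noncomputable def segLenSqSum {α : Type*} (l : List α) : ℕ :=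
  ∑ p ∈ maxAltSegs l, (p.2 + 1 - p.1) ^ 2

/-- `x ∈ Z_2^n` is `a`-balanced: it has `a` maximal alternating segments, each of
length `⌈n/a⌉` or `⌈n/a⌉ - 1`. -/
def IsBalanced (n a : ℕ) (x : Fin n → Fin 2) : Prop :=
  numAltSegs (List.ofFn x) = a ∧
    ∀ p ∈ maxAltSegs (List.ofFn x),
      p.2 + 1 - p.1 = (n + a - 1) / a ∨ p.2 + 1 - p.1 = (n + a - 1) / a - 1

/-- The number of zero entries of the difference vector
`x' = (x₂ - x₁, …, x_n - x_{n-1})` (differences mod `q`). -/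
def zerosDiff {q n : ℕ} (x : Fin n → Fin q) : ℕ :=
  (List.zipWith (fun a b => a - b) (List.ofFn x).tail (List.ofFn x)).countP fun v => v.val == 0

/-- Hamming weight of a binary word. -/
def wt {n : ℕ} (a : Fin n → Fin 2) : ℕ := (Finset.univ.filter fun i => a i ≠ 0).card

/-- An anticode of diameter one in `Z_2^n` under the FLL metric. -/
def IsAnticode1 (n : ℕ) (A : Finset (Fin n → Fin 2)) : Prop :=
  ∀ a ∈ A, ∀ b ∈ A, fllDist a b ≤ 1

/-- A maximal anticode of diameter one. -/
def IsMaximalAnticode1 (n : ℕ) (A : Finset (Fin n → Fin 2)) : Prop :=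
  IsAnticode1 n A ∧ ∀ B : Finset (Fin n → Fin 2), IsAnticode1 n B → A ⊆ B → A = B

/-- `χ(s)`: the total number, over all `x ∈ Z_q^n`, of maximal alternating
segments of `x` of length `s`. -/
noncomputable def chi (q n s : ℕ) : ℕ :=
  ∑ x : Fin n → Fin q, ((maxAltSegs (List.ofFn x)).filter fun p => p.2 + 1 - p.1 = s).card
namespace SegAux

variable {α : Type*}

/-- Pointwise alternation condition on indices `[u, v]` of `f : ℕ → α`. -/
def Alt (f : ℕ → α) (u v : ℕ) : Prop :=
  (∀ k, u ≤ k → k < v → f k ≠ f (k + 1)) ∧ (∀ k, u ≤ k → k + 2 ≤ v → f k = f (k + 2))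

lemma Alt.mono {f : ℕ → α} {u v u' v' : ℕ} (h : Alt f u v) (h1 : u ≤ u') (h2 : v' ≤ v) :
    Alt f u' v' :=
  ⟨fun k hk hk' => h.1 k (h1.trans hk) (hk'.trans_le h2),
   fun k hk hk' => h.2 k (h1.trans hk) (hk'.trans h2)⟩

lemma Alt.glue {f : ℕ → α} {a m c b : ℕ} (h1 : Alt f a m) (h2 : Alt f c b) (hac : a ≤ c)
    (hcm : c < m) (hmb : m ≤ b) : Alt f a b := by
  constructor
  · intro k hk hkb
    by_cases hkm : k < m
    · exact h1.1 k hk hkm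
    · exact h2.1 k (by omega) hkb
  · intro k hk hkb
    by_cases hkm : k + 2 ≤ m
    · exact h1.2 k hk hkm
    · exact h2.2 k (by omega) hkb

lemma alt_self (f : ℕ → α) (u : ℕ) : Alt f u u :=
  ⟨fun _ _ h1 h2 => by omega, fun _ _ h1 => by omega⟩

lemma alt_adj {f : ℕ → α} {u : ℕ} (h : f u ≠ f (u + 1)) : Alt f u (u + 1) := by
  refine ⟨fun k hk hk' => ?_, fun k hk hk' => by omega⟩
  obtain rfl : k = u := by omega
  exact h

lemma blockSeg_length (l : List α) {u v : ℕ} (huv : u ≤ v) (hv : v < l.length) :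
    (blockSeg l u v).length = v + 1 - u := by
  simp [blockSeg]; omega

lemma blockSeg_get (l : List α) {u v k : ℕ} (hv : v < l.length) (hk : k < (blockSeg l u v).length) :
    (blockSeg l u v)[k] = l[u + k]'(by simp [blockSeg] at hk; omega) := by
  simp only [blockSeg] at hk ⊢
  rw [List.getElem_take, List.getElem_drop]

/-- Bridge: `IsAltList (blockSeg l u v)` as a pointwise condition. -/
lemma isAltList_blockSeg_iff {l : List α} {f : ℕ → α}
    (hf : ∀ k (h : k < l.length), l[k] = f k) {u v : ℕ} (huv : u ≤ v) (hv : v < l.length) :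
    IsAltList (blockSeg l u v) ↔ Alt f u v := by
  have hlen : (blockSeg l u v).length = v + 1 - u := blockSeg_length l huv hv
  constructor
  · rintro ⟨h1, h2⟩
    constructor
    · intro k hk hk'
      have hki : k - u + 1 < (blockSeg l u v).length := by omega
      have := h1 (k - u) hki
      simp only [List.get_eq_getElem] at this
      rw [blockSeg_get l hv, blockSeg_get l hv] at this
      rw [hf _ (by omega), hf _ (by omega)] at this
      have e1 : u + (k - u) = k := by omega
      have e2 : u + (k - u + 1) = k + 1 := by omega
      rwa [e1, e2] at this
    · intro k hk hk'
      have hki : k - u + 2 < (blockSeg l u v).length := by omega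
      have := h2 (k - u) hki
      simp only [List.get_eq_getElem] at this
      rw [blockSeg_get l hv, blockSeg_get l hv] at this
      rw [hf _ (by omega), hf _ (by omega)] at this
      have e1 : u + (k - u) = k := by omega
      have e2 : u + (k - u + 2) = k + 2 := by omega
      rwa [e1, e2] at this
  · rintro ⟨h1, h2⟩
    constructor
    · intro i hi
      simp only [List.get_eq_getElem]
      rw [blockSeg_get l hv, blockSeg_get l hv, hf _ (by omega), hf _ (by omega)]
      have e2 : u + (i + 1) = u + i + 1 := by omega
      rw [e2]
      exact h1 (u + i) (by omega) (by omega)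
    · intro i hi
      simp only [List.get_eq_getElem]
      rw [blockSeg_get l hv, blockSeg_get l hv, hf _ (by omega), hf _ (by omega)]
      have e2 : u + (i + 2) = u + i + 2 := by omega
      rw [e2]
      exact h2 (u + i) (by omega) (by omega)

/-- Pointwise version of `IsMaxAltSeg`. -/
def MaxP (f : ℕ → α) (n i j : ℕ) : Prop :=
  i ≤ j ∧ j < n ∧ Alt f i j ∧ (i = 0 ∨ ¬ Alt f (i - 1) j) ∧ (j = n - 1 ∨ ¬ Alt f i (j + 1))

lemma isMaxAltSeg_iff {l : List α} {f : ℕ → α}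
    (hf : ∀ k (h : k < l.length), l[k] = f k) {i j : ℕ} :
    IsMaxAltSeg l i j ↔ MaxP f l.length i j := by
  unfold IsMaxAltSeg MaxP
  constructor
  · rintro ⟨hij, hj, h1, h2, h3⟩
    refine ⟨hij, hj, (isAltList_blockSeg_iff hf hij hj).mp h1, ?_, ?_⟩
    · rcases h2 with h2 | h2
      · exact Or.inl h2
      · exact Or.inr fun hc => h2 ((isAltList_blockSeg_iff hf (by omega) hj).mpr hc)
    · rcases h3 with h3 | h3
      · exact Or.inl h3
      · by_cases hj1 : j + 1 < l.length
        · exact Or.inr fun hc => h3 ((isAltList_blockSeg_iff hf (by omega) hj1).mpr hc)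
        · exact Or.inl (by omega)
  · rintro ⟨hij, hj, h1, h2, h3⟩
    refine ⟨hij, hj, (isAltList_blockSeg_iff hf hij hj).mpr h1, ?_, ?_⟩
    · rcases h2 with h2 | h2
      · exact Or.inl h2
      · exact Or.inr fun hc => h2 ((isAltList_blockSeg_iff hf (by omega) hj).mp hc)
    · rcases h3 with h3 | h3
      · exact Or.inl h3
      · by_cases hj1 : j + 1 < l.length
        · exact Or.inr fun hc => h3 ((isAltList_blockSeg_iff hf (by omega) hj1).mp hc)
        · exact Or.inl (by omega)

end SegAux
namespace SegAux

variable {α : Type*}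

lemma exists_max {f : ℕ → α} {n u v : ℕ} (huv : u < v) (hv : v < n) (ha : Alt f u v) :
    ∃ i j, MaxP f n i j ∧ i ≤ u ∧ v ≤ j := by
  classical
  obtain ⟨d, hdu, hPd, hdmax⟩ :
      ∃ d, d ≤ u ∧ Alt f (u - d) v ∧ ∀ d', d < d' → d' ≤ u → ¬ Alt f (u - d') v :=
    ⟨Nat.findGreatest (fun d => Alt f (u - d) v) u, Nat.findGreatest_le u,
      Nat.findGreatest_spec (P := fun d => Alt f (u - d) v) (m := 0) (Nat.zero_le u)
        (by simpa using ha),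
      fun d' h1 h2 => Nat.findGreatest_is_greatest (P := fun d => Alt f (u - d) v) h1 h2⟩
  obtain ⟨j, hjn, hvj, hPj, hjmax⟩ :
      ∃ j, j ≤ n - 1 ∧ v ≤ j ∧ Alt f u j ∧ ∀ j', j < j' → j' ≤ n - 1 → ¬ Alt f u j' :=
    ⟨Nat.findGreatest (fun j => Alt f u j) (n - 1), Nat.findGreatest_le _,
      Nat.le_findGreatest (by omega) ha, Nat.findGreatest_spec (m := v) (by omega) ha,
      fun j' h1 h2 => Nat.findGreatest_is_greatest h1 h2⟩
  refine ⟨u - d, j, ⟨by omega, by omega, ?_, ?_, ?_⟩, by omega, hvj⟩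
  · exact hPd.glue hPj (by omega) (by omega) (by omega)
  · by_cases h0 : u - d = 0
    · exact Or.inl h0
    · refine Or.inr fun hc => ?_
      refine hdmax (d + 1) (by omega) (by omega) ?_
      have he : u - (d + 1) = u - d - 1 := by omega
      rw [he]
      exact Alt.mono hc le_rfl (by omega)
  · by_cases h0 : j = n - 1
    · exact Or.inl h0
    · exact Or.inr fun hc => hjmax (j + 1) (by omega) (by omega) (Alt.mono hc (by omega) le_rfl)

lemma max_unique {f : ℕ → α} {n a b i j i' j' : ℕ} (hab : a < b)
    (h : MaxP f n i j) (h' : MaxP f n i' j')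
    (hia : i ≤ a) (hbj : b ≤ j) (hia' : i' ≤ a) (hbj' : b ≤ j') : i = i' ∧ j = j' := by
  obtain ⟨hij, hjn, halt, hleft, hright⟩ := h
  obtain ⟨hij', hjn', halt', hleft', hright'⟩ := h'
  have key : ∀ (i1 j1 i2 j2 : ℕ), i1 ≤ a → b ≤ j1 → i2 ≤ a → b ≤ j2 →
      Alt f i1 j1 → Alt f i2 j2 → (i2 = 0 ∨ ¬ Alt f (i2 - 1) j2) → ¬ (i1 < i2) := by
    intro i1 j1 i2 j2 h1a hb1 h2a hb2 ha1 ha2 hl2 hlt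
    have : Alt f (i2 - 1) j2 :=
      (ha1.mono (by omega) hb1).glue ha2 (by omega) (by omega) hb2
    rcases hl2 with h0 | h0
    · omega
    · exact h0 this
  have keyR : ∀ (i1 j1 i2 j2 : ℕ), i1 ≤ a → b ≤ j1 → i2 ≤ a → b ≤ j2 → j1 < n →
      Alt f i1 j1 → Alt f i2 j2 → (j2 = n - 1 ∨ ¬ Alt f i2 (j2 + 1)) → ¬ (j2 < j1) := by
    intro i1 j1 i2 j2 h1a hb1 h2a hb2 hj1n ha1 ha2 hr2 hlt
    have : Alt f i2 (j2 + 1) :=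
      ha2.glue (ha1.mono h1a (by omega)) h2a (by omega) (by omega)
    rcases hr2 with h0 | h0
    · omega
    · exact h0 this
  constructor
  · rcases lt_trichotomy i i' with hc | hc | hc
    · exact absurd hc (key i j i' j' hia hbj hia' hbj' halt halt' hleft')
    · exact hc
    · exact absurd hc (key i' j' i j hia' hbj' hia hbj halt' halt hleft)
  · rcases lt_trichotomy j j' with hc | hc | hc
    · exact absurd hc (keyR i' j' i j hia' hbj' hia hbj hjn' halt' halt hright)
    · exact hc
    · exact absurd hc (keyR i j i' j' hia hbj hia' hbj' hjn halt halt' hright')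

lemma mem_maxAltSegs_iff {l : List α} {f : ℕ → α}
    (hf : ∀ k (h : k < l.length), l[k] = f k) {p : ℕ × ℕ} :
    p ∈ maxAltSegs l ↔ MaxP f l.length p.1 p.2 := by
  simp only [maxAltSegs, Finset.mem_filter, Finset.mem_product, Finset.mem_range]
  constructor
  · rintro ⟨-, h⟩
    exact (isMaxAltSeg_iff hf).mp h
  · intro h
    refine ⟨⟨by have := h.1; have := h.2.1; omega, h.2.1⟩, (isMaxAltSeg_iff hf).mpr h⟩

end SegAux
namespace SegAux

variable {α : Type*}

/-- Overlap condition at position `a`. -/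
def Ov (f : ℕ → α) (n a : ℕ) : Prop :=
  0 < a ∧ a + 1 < n ∧ f (a - 1) ≠ f a ∧ f a ≠ f (a + 1) ∧ f (a - 1) ≠ f (a + 1)

lemma count_pair {l : List α} {f : ℕ → α}
    (hf : ∀ k (h : k < l.length), l[k] = f k) {a b : ℕ} (hab : a < b) (hb : b < l.length) :
    ((maxAltSegs l).filter fun p => p.1 ≤ a ∧ a ≤ p.2 ∧ p.1 ≤ b ∧ b ≤ p.2).card
      = if Alt f a b then 1 else 0 := by
  classical
  by_cases hAlt : Alt f a b
  · obtain ⟨i, j, hmax, hi, hj⟩ := exists_max hab hb hAlt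
    rw [if_pos hAlt]
    have : ((maxAltSegs l).filter fun p => p.1 ≤ a ∧ a ≤ p.2 ∧ p.1 ≤ b ∧ b ≤ p.2)
        = {(i, j)} := by
      ext p
      simp only [Finset.mem_filter, Finset.mem_singleton, mem_maxAltSegs_iff hf]
      constructor
      · rintro ⟨hp, h1, h2, h3, h4⟩
        obtain ⟨e1, e2⟩ := max_unique hab hp hmax h1 h4 hi hj
        exact Prod.ext e1 e2
      · rintro rfl
        exact ⟨hmax, hi, by omega, by omega, hj⟩
    rw [this, Finset.card_singleton]
  · rw [if_neg hAlt, Finset.card_eq_zero, Finset.filter_eq_empty_iff]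
    rintro p hp ⟨h1, h2, h3, h4⟩
    exact hAlt ((((mem_maxAltSegs_iff hf).mp hp).2.2.1).mono h1 h4)

lemma count_single {l : List α} {f : ℕ → α}
    (hf : ∀ k (h : k < l.length), l[k] = f k) {a : ℕ} (ha : a < l.length) :
    ((maxAltSegs l).filter fun p => p.1 ≤ a ∧ a ≤ p.2).card
      = if Ov f l.length a then 2 else 1 := by
  classical
  set n := l.length with hn
  set F := (maxAltSegs l).filter fun p => p.1 ≤ a ∧ a ≤ p.2 with hF
  have hmem : ∀ p, p ∈ F ↔ MaxP f n p.1 p.2 ∧ p.1 ≤ a ∧ a ≤ p.2 := by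
    intro p
    simp only [hF, Finset.mem_filter, mem_maxAltSegs_iff hf, and_assoc]
    exact Iff.rfl
  by_cases hL : 0 < a ∧ f (a - 1) ≠ f a
  · obtain ⟨ha0, hLne⟩ := hL
    have hAL : Alt f (a - 1) a := by
      have := alt_adj (f := f) (u := a - 1) (by rw [show a - 1 + 1 = a by omega]; exact hLne)
      rwa [show a - 1 + 1 = a by omega] at this
    by_cases hR : a + 1 < n ∧ f a ≠ f (a + 1)
    · obtain ⟨haR, hRne⟩ := hR
      have hAR : Alt f a (a + 1) := alt_adj hRne
      by_cases hEq : f (a - 1) = f (a + 1)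
      · -- L, R, no overlap: one segment through a-1, a, a+1
        have hOv : ¬ Ov f n a := fun h => h.2.2.2.2 hEq
        have hA2 : Alt f (a - 1) (a + 1) := by
          constructor
          · intro k hk hk'
            rcases Nat.lt_or_ge k a with hka | hka
            · obtain rfl : k = a - 1 := by omega
              rw [show a - 1 + 1 = a by omega]; exact hLne
            · obtain rfl : k = a := by omega
              exact hRne
          · intro k hk hk'
            obtain rfl : k = a - 1 := by omega
            rw [show a - 1 + 2 = a + 1 by omega]; exact hEq
        obtain ⟨i, j, hmax, hi, hj⟩ := exists_max (n := n) (show a - 1 < a + 1 by omega) haR hA2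
        have hFeq : F = {(i, j)} := by
          ext p
          rw [hmem, Finset.mem_singleton]
          constructor
          · rintro ⟨hp, h1, h2⟩
            have hpn : p.2 < n := hp.2.1
            have hp12 : p.1 ≤ p.2 := hp.1
            have hpalt := hp.2.2.1
            have hp1 : p.1 ≠ a := by
              rintro he
              rcases hp.2.2.2.1 with h0 | h0
              · omega
              · rw [he] at h0
                rcases Nat.eq_or_lt_of_le h2 with h3 | h3
                · refine h0 ?_
                  rw [← h3]; exact hAL
                · have hx : Alt f a p.2 := hpalt.mono he.le le_rfl
                  exact h0 (hA2.glue hx (by omega) (by omega) (by omega))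
            have hp2 : p.2 ≠ a := by
              rintro he
              rcases hp.2.2.2.2 with h0 | h0
              · omega
              · rw [he] at h0
                have hb1 : Alt f p.1 a := hpalt.mono le_rfl (by omega)
                exact h0 (hb1.glue hA2 (by omega) (by omega) (by omega))
            obtain ⟨e1, e2⟩ := max_unique (show a - 1 < a + 1 by omega) hp hmax
              (by omega) (by omega) hi hj
            exact Prod.ext e1 e2
          · rintro rfl
            exact ⟨hmax, by omega, by omega⟩
        rw [if_neg hOv, hFeq, Finset.card_singleton]
      · -- L, R, overlap: two segments
        have hOv : Ov f n a := ⟨ha0, haR, hLne, hRne, hEq⟩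
        have hNA : ¬ Alt f (a - 1) (a + 1) := by
          intro h
          refine hEq ?_
          have := h.2 (a - 1) le_rfl (by omega)
          rwa [show a - 1 + 2 = a + 1 by omega] at this
        obtain ⟨i1, j1, hm1, hi1, hj1⟩ := exists_max (n := n) (show a - 1 < a by omega) (by omega) hAL
        obtain ⟨i2, j2, hm2, hi2, hj2⟩ := exists_max (n := n) (show a < a + 1 by omega) haR hAR
        have hj1a : j1 = a := by
          by_contra hne
          exact hNA (hm1.2.2.1.mono hi1 (by omega))
        have hi2a : i2 = a := by
          by_contra hne
          exact hNA (hm2.2.2.1.mono (by omega) hj2)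
        rw [hj1a] at hm1
        rw [hi2a] at hm2
        have hFeq : F = {(i1, a), (a, j2)} := by
          ext p
          rw [hmem, Finset.mem_insert, Finset.mem_singleton]
          constructor
          · rintro ⟨hp, h1, h2⟩
            have hpn : p.2 < n := hp.2.1
            have hp12 : p.1 ≤ p.2 := hp.1
            have hnot : ¬ (p.1 ≤ a - 1 ∧ a + 1 ≤ p.2) := by
              rintro ⟨hh1, hh2⟩
              exact hNA (hp.2.2.1.mono hh1 hh2)
            rcases Nat.eq_or_lt_of_le h1 with he1 | he1
            · -- p.1 = a
              have hp2 : a + 1 ≤ p.2 := by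
                rcases Nat.eq_or_lt_of_le h2 with he2 | he2
                · exfalso
                  rcases hp.2.2.2.1 with h0 | h0
                  · omega
                  · refine h0 ?_
                    rw [he1, ← he2]
                    exact hAL
                · omega
              right
              obtain ⟨e1, e2⟩ := max_unique (show a < a + 1 by omega) hp hm2
                (by omega) hp2 le_rfl hj2
              exact Prod.ext e1 e2
            · -- p.1 < a
              have hp2 : p.2 = a := by omega
              left
              obtain ⟨e1, e2⟩ := max_unique (show a - 1 < a by omega) hp hm1
                (by omega) (by omega) hi1 le_rfl
              exact Prod.ext e1 (by omega)
          · rintro (rfl | rfl)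
            · exact ⟨hm1, by omega, le_rfl⟩
            · exact ⟨hm2, le_rfl, by omega⟩
        rw [if_pos hOv, hFeq]
        rw [Finset.card_insert_of_notMem (by simp; omega), Finset.card_singleton]
    · -- L, not R
      have hOv : ¬ Ov f n a := fun h => hR ⟨h.2.1, h.2.2.2.1⟩
      obtain ⟨i, j, hmax, hi, hj⟩ := exists_max (n := n) (show a - 1 < a by omega) (by omega) hAL
      have hja : j = a := by
        by_contra hne
        have hjn : j < n := hmax.2.1
        have h2 : Alt f a (a + 1) := hmax.2.2.1.mono (by omega) (by omega)
        exact hR ⟨by omega, h2.1 a le_rfl (by omega)⟩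
      rw [hja] at hmax
      have hFeq : F = {(i, a)} := by
        ext p
        rw [hmem, Finset.mem_singleton]
        constructor
        · rintro ⟨hp, h1, h2⟩
          have hpn : p.2 < n := hp.2.1
          have hp2 : p.2 = a := by
            rcases Nat.eq_or_lt_of_le h2 with he2 | he2
            · omega
            · exfalso
              have h3 : Alt f a (a + 1) := hp.2.2.1.mono h1 (by omega)
              exact hR ⟨by omega, h3.1 a le_rfl (by omega)⟩
          have hp1 : p.1 ≠ a := by
            rintro he
            rcases hp.2.2.2.1 with h0 | h0
            · omega
            · rw [he] at h0
              rw [hp2] at h0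
              exact h0 hAL
          obtain ⟨e1, e2⟩ := max_unique (show a - 1 < a by omega) hp hmax
            (by omega) (by omega) hi le_rfl
          exact Prod.ext e1 (by omega)
        · rintro rfl
          exact ⟨hmax, by omega, le_rfl⟩
      rw [if_neg hOv, hFeq, Finset.card_singleton]
  · -- not L
    have hOv : ¬ Ov f n a := fun h => hL ⟨h.1, h.2.2.1⟩
    by_cases hR : a + 1 < n ∧ f a ≠ f (a + 1)
    · -- not L, R
      obtain ⟨haR, hRne⟩ := hR
      have hAR : Alt f a (a + 1) := alt_adj hRne
      obtain ⟨i, j, hmax, hi, hj⟩ := exists_max (n := n) (show a < a + 1 by omega) haR hAR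
      have hia : i = a := by
        by_contra hne
        have h2 : Alt f (a - 1) a := hmax.2.2.1.mono (by omega) (by omega)
        refine hL ⟨by omega, ?_⟩
        have := h2.1 (a - 1) le_rfl (by omega)
        rwa [show a - 1 + 1 = a by omega] at this
      rw [hia] at hmax
      have hFeq : F = {(a, j)} := by
        ext p
        rw [hmem, Finset.mem_singleton]
        constructor
        · rintro ⟨hp, h1, h2⟩
          have hpn : p.2 < n := hp.2.1
          have hp1 : p.1 = a := by
            rcases Nat.eq_or_lt_of_le h1 with he1 | he1
            · omega
            · exfalso
              have h3 : Alt f (a - 1) a := hp.2.2.1.mono (by omega) (by omega)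
              refine hL ⟨by omega, ?_⟩
              have := h3.1 (a - 1) le_rfl (by omega)
              rwa [show a - 1 + 1 = a by omega] at this
          have hp2 : p.2 ≠ a := by
            rintro he
            rcases hp.2.2.2.2 with h0 | h0
            · omega
            · rw [hp1, he] at h0
              exact h0 hAR
          obtain ⟨e1, e2⟩ := max_unique (show a < a + 1 by omega) hp hmax
            (by omega) (by omega) le_rfl hj
          exact Prod.ext e1 e2
        · rintro rfl
          exact ⟨hmax, le_rfl, by omega⟩
      rw [if_neg hOv, hFeq, Finset.card_singleton]
    · -- not L, not R : the singleton (a, a)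
      have hmaxaa : MaxP f n a a := by
        refine ⟨le_rfl, ha, alt_self f a, ?_, ?_⟩
        · by_cases h0 : a = 0
          · exact Or.inl h0
          · refine Or.inr fun hc => ?_
            have := hc.1 (a - 1) le_rfl (by omega)
            rw [show a - 1 + 1 = a by omega] at this
            exact hL ⟨by omega, this⟩
        · by_cases h0 : a = n - 1
          · exact Or.inl h0
          · refine Or.inr fun hc => ?_
            exact hR ⟨by omega, hc.1 a le_rfl (by omega)⟩
      have hFeq : F = {(a, a)} := by
        ext p
        rw [hmem, Finset.mem_singleton]
        constructor
        · rintro ⟨hp, h1, h2⟩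
          have hpn : p.2 < n := hp.2.1
          have hp1 : p.1 = a := by
            rcases Nat.eq_or_lt_of_le h1 with he1 | he1
            · omega
            · exfalso
              have h3 : Alt f (a - 1) a := hp.2.2.1.mono (by omega) (by omega)
              refine hL ⟨by omega, ?_⟩
              have := h3.1 (a - 1) le_rfl (by omega)
              rwa [show a - 1 + 1 = a by omega] at this
          have hp2 : p.2 = a := by
            rcases Nat.eq_or_lt_of_le h2 with he2 | he2
            · omega
            · exfalso
              have h3 : Alt f a (a + 1) := hp.2.2.1.mono h1 (by omega)
              exact hR ⟨by omega, h3.1 a le_rfl (by omega)⟩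
          exact Prod.ext hp1 hp2
        · rintro rfl
          exact ⟨hmaxaa, le_rfl, le_rfl⟩
      rw [if_neg hOv, hFeq, Finset.card_singleton]

end SegAux
namespace SegAux

variable {α : Type*}

lemma segLenSqSum_eq {l : List α} {f : ℕ → α} (hf : ∀ k (h : k < l.length), l[k] = f k) :
    segLenSqSum l = l.length
      + ((Finset.range l.length).filter fun a => Ov f l.length a).card
      + 2 * (((Finset.range l.length ×ˢ Finset.range l.length).filter
          fun p => p.1 < p.2 ∧ Alt f p.1 p.2).card) := by
  classical
  set n := l.length with hn
  set S := Finset.range n ×ˢ Finset.range n with hS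
  set M := maxAltSegs l with hM
  have hMp : ∀ p ∈ M, p.1 ≤ p.2 ∧ p.2 < n := by
    intro p hp
    have := (mem_maxAltSegs_iff hf).mp hp
    exact ⟨this.1, this.2.1⟩
  have step1 : segLenSqSum l = ∑ p ∈ M, ∑ ab ∈ S,
      (if p.1 ≤ ab.1 ∧ ab.1 ≤ p.2 ∧ p.1 ≤ ab.2 ∧ ab.2 ≤ p.2 then 1 else 0) := by
    unfold segLenSqSum
    refine Finset.sum_congr rfl fun p hp => ?_
    obtain ⟨h1, h2⟩ := hMp p hp
    rw [← Finset.card_filter]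
    have hset : (S.filter fun ab => p.1 ≤ ab.1 ∧ ab.1 ≤ p.2 ∧ p.1 ≤ ab.2 ∧ ab.2 ≤ p.2)
        = Finset.Icc p.1 p.2 ×ˢ Finset.Icc p.1 p.2 := by
      ext ab
      simp only [hS, Finset.mem_filter, Finset.mem_product, Finset.mem_range, Finset.mem_Icc]
      omega
    rw [hset, Finset.card_product, Nat.card_Icc, pow_two]
  rw [step1, Finset.sum_comm]
  have step2 : ∀ ab ∈ S, (∑ p ∈ M,
      if p.1 ≤ ab.1 ∧ ab.1 ≤ p.2 ∧ p.1 ≤ ab.2 ∧ ab.2 ≤ p.2 then 1 else 0)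
      = (M.filter fun p => p.1 ≤ ab.1 ∧ ab.1 ≤ p.2 ∧ p.1 ≤ ab.2 ∧ ab.2 ≤ p.2).card := by
    intro ab _
    rw [Finset.card_filter]
  rw [Finset.sum_congr rfl step2]
  -- split the sum over S into diagonal, lower, upper parts
  rw [← Finset.sum_filter_add_sum_filter_not S (fun ab => ab.1 = ab.2)]
  rw [← Finset.sum_filter_add_sum_filter_not (S.filter fun ab => ¬ ab.1 = ab.2)
    (fun ab => ab.1 < ab.2)]
  have diag : (∑ ab ∈ S.filter (fun ab => ab.1 = ab.2),
      (M.filter fun p => p.1 ≤ ab.1 ∧ ab.1 ≤ p.2 ∧ p.1 ≤ ab.2 ∧ ab.2 ≤ p.2).card)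
      = n + ((Finset.range n).filter fun a => Ov f n a).card := by
    have hbij : ∑ ab ∈ S.filter (fun ab => ab.1 = ab.2),
        (M.filter fun p => p.1 ≤ ab.1 ∧ ab.1 ≤ p.2 ∧ p.1 ≤ ab.2 ∧ ab.2 ≤ p.2).card
        = ∑ a ∈ Finset.range n, if Ov f n a then 2 else 1 := by
      refine Finset.sum_nbij' (fun ab => ab.1) (fun a => (a, a)) ?_ ?_ ?_ ?_ ?_
      · intro ab hab
        simp only [hS, Finset.mem_filter, Finset.mem_product, Finset.mem_range] at hab ⊢
        exact hab.1.1
      · intro a ha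
        simp only [hS, Finset.mem_filter, Finset.mem_product, Finset.mem_range] at ha ⊢
        exact ⟨⟨ha, ha⟩, trivial⟩
      · intro ab hab
        simp only [hS, Finset.mem_filter] at hab
        exact Prod.ext rfl hab.2
      · intro a ha
        rfl
      · intro ab hab
        simp only [hS, Finset.mem_filter, Finset.mem_product, Finset.mem_range] at hab
        obtain ⟨⟨h1, h2⟩, heq⟩ := hab
        have : (M.filter fun p => p.1 ≤ ab.1 ∧ ab.1 ≤ p.2 ∧ p.1 ≤ ab.2 ∧ ab.2 ≤ p.2)
            = M.filter fun p => p.1 ≤ ab.1 ∧ ab.1 ≤ p.2 := by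
          refine Finset.filter_congr fun p hp => ?_
          rw [← heq]
          constructor
          · rintro ⟨u1, u2, u3, u4⟩; exact ⟨u1, u2⟩
          · rintro ⟨u1, u2⟩; exact ⟨u1, u2, u1, u2⟩
        rw [this, count_single hf h1]
    rw [hbij]
    have : ∀ a ∈ Finset.range n, (if Ov f n a then 2 else 1)
        = 1 + (if Ov f n a then 1 else 0) := by
      intro a _
      by_cases h : Ov f n a <;> simp [h]
    rw [Finset.sum_congr rfl this, Finset.sum_add_distrib, Finset.sum_const,
      Finset.card_range, smul_eq_mul, mul_one, ← Finset.card_filter]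
  have lower : (∑ ab ∈ (S.filter fun ab => ¬ ab.1 = ab.2).filter (fun ab => ab.1 < ab.2),
      (M.filter fun p => p.1 ≤ ab.1 ∧ ab.1 ≤ p.2 ∧ p.1 ≤ ab.2 ∧ ab.2 ≤ p.2).card)
      = (S.filter fun p => p.1 < p.2 ∧ Alt f p.1 p.2).card := by
    have hss : (S.filter fun ab => ¬ ab.1 = ab.2).filter (fun ab => ab.1 < ab.2)
        = S.filter fun ab => ab.1 < ab.2 := by
      rw [Finset.filter_filter]
      exact Finset.filter_congr fun ab _ => by omega
    rw [hss]
    have : ∀ ab ∈ S.filter fun ab => ab.1 < ab.2,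
        (M.filter fun p => p.1 ≤ ab.1 ∧ ab.1 ≤ p.2 ∧ p.1 ≤ ab.2 ∧ ab.2 ≤ p.2).card
        = if Alt f ab.1 ab.2 then 1 else 0 := by
      intro ab hab
      simp only [hS, Finset.mem_filter, Finset.mem_product, Finset.mem_range] at hab
      exact count_pair hf hab.2 hab.1.2
    rw [Finset.sum_congr rfl this, ← Finset.card_filter, Finset.filter_filter]
  have upper : (∑ ab ∈ (S.filter fun ab => ¬ ab.1 = ab.2).filter (fun ab => ¬ ab.1 < ab.2),
      (M.filter fun p => p.1 ≤ ab.1 ∧ ab.1 ≤ p.2 ∧ p.1 ≤ ab.2 ∧ ab.2 ≤ p.2).card)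
      = (S.filter fun p => p.1 < p.2 ∧ Alt f p.1 p.2).card := by
    have hss : (S.filter fun ab => ¬ ab.1 = ab.2).filter (fun ab => ¬ ab.1 < ab.2)
        = S.filter fun ab => ab.2 < ab.1 := by
      rw [Finset.filter_filter]
      exact Finset.filter_congr fun ab _ => by omega
    rw [hss]
    have hswap : ∑ ab ∈ S.filter (fun ab => ab.2 < ab.1),
        (M.filter fun p => p.1 ≤ ab.1 ∧ ab.1 ≤ p.2 ∧ p.1 ≤ ab.2 ∧ ab.2 ≤ p.2).card
        = ∑ ab ∈ S.filter (fun ab => ab.1 < ab.2),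
        (M.filter fun p => p.1 ≤ ab.1 ∧ ab.1 ≤ p.2 ∧ p.1 ≤ ab.2 ∧ ab.2 ≤ p.2).card := by
      refine Finset.sum_nbij' (fun ab => (ab.2, ab.1)) (fun ab => (ab.2, ab.1)) ?_ ?_ ?_ ?_ ?_
      · intro ab hab
        simp only [hS, Finset.mem_filter, Finset.mem_product, Finset.mem_range] at hab ⊢
        exact ⟨⟨hab.1.2, hab.1.1⟩, hab.2⟩
      · intro ab hab
        simp only [hS, Finset.mem_filter, Finset.mem_product, Finset.mem_range] at hab ⊢
        exact ⟨⟨hab.1.2, hab.1.1⟩, hab.2⟩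
      · intro ab _; rfl
      · intro ab _; rfl
      · intro ab _
        congr 1
        refine Finset.filter_congr fun p hp => ?_
        constructor
        · rintro ⟨u1, u2, u3, u4⟩; exact ⟨u3, u4, u1, u2⟩
        · rintro ⟨u1, u2, u3, u4⟩; exact ⟨u3, u4, u1, u2⟩
    rw [hswap]
    have : ∀ ab ∈ S.filter fun ab => ab.1 < ab.2,
        (M.filter fun p => p.1 ≤ ab.1 ∧ ab.1 ≤ p.2 ∧ p.1 ≤ ab.2 ∧ ab.2 ≤ p.2).card
        = if Alt f ab.1 ab.2 then 1 else 0 := by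
      intro ab hab
      simp only [hS, Finset.mem_filter, Finset.mem_product, Finset.mem_range] at hab
      exact count_pair hf hab.2 hab.1.2
    rw [Finset.sum_congr rfl this, ← Finset.card_filter, Finset.filter_filter]
  rw [diag, lower, upper]
  ring

end SegAux
namespace SegAux

open Finset

variable {q n : ℕ}

/-- Canonical counting function, insensitive to decidability instances. -/
noncomputable def cnt {β : Type*} [Fintype β] (P : β → Prop) : ℕ :=
  @Finset.card β (@Finset.filter β P (Classical.decPred P) Finset.univ)

lemma cnt_eq {β : Type*} [Fintype β] (P : β → Prop) [DecidablePred P] :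
    cnt P = (Finset.univ.filter P).card := by
  unfold cnt
  congr 1
  exact Finset.filter_congr_decidable _ _ _

lemma cnt_congr {β : Type*} [Fintype β] {P Q : β → Prop} (h : ∀ x, P x ↔ Q x) :
    cnt P = cnt Q := by
  have : P = Q := funext fun x => propext (h x)
  rw [this]

/-- Extension of `x : Fin n → Fin q` to `ℕ → Fin q`. -/
def extF [NeZero q] (x : Fin n → Fin q) : ℕ → Fin q :=
  fun k => if h : k < n then x ⟨k, h⟩ else 0

lemma extF_ofFn [NeZero q] (x : Fin n → Fin q) :
    ∀ k (h : k < (List.ofFn x).length), (List.ofFn x)[k] = extF x k := by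
  intro k h
  rw [List.length_ofFn] at h
  simp [List.getElem_ofFn, extF, h]

lemma extF_update_ne [NeZero q] (x : Fin n → Fin q) (j : Fin n) (c : Fin q) {k : ℕ}
    (hk : k ≠ (j : ℕ)) : extF (Function.update x j c) k = extF x k := by
  unfold extF
  split
  · next h =>
    rw [Function.update_of_ne]
    exact fun he => hk (by rw [← he])
  · rfl

lemma extF_at [NeZero q] (x : Fin n → Fin q) (j : Fin n) : extF x (j : ℕ) = x j := by
  simp [extF, j.isLt]

lemma card_univ_fun : (Finset.univ : Finset (Fin n → Fin q)).card = q ^ n := by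
  simp [Finset.card_univ]

lemma cnt_true : cnt (fun _ : Fin n → Fin q => True) = q ^ n := by
  classical
  rw [cnt_eq, Finset.filter_true, card_univ_fun]

lemma alt_congr {α : Type*} {f g : ℕ → α} {u v : ℕ}
    (h : ∀ k, u ≤ k → k ≤ v → f k = g k) : Alt f u v ↔ Alt g u v := by
  constructor <;> intro hh <;> constructor
  · intro k h1 h2
    rw [← h k h1 (by omega), ← h (k+1) (by omega) (by omega)]
    exact hh.1 k h1 h2
  · intro k h1 h2
    rw [← h k h1 (by omega), ← h (k+2) (by omega) (by omega)]
    exact hh.2 k h1 h2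
  · intro k h1 h2
    rw [h k h1 (by omega), h (k+1) (by omega) (by omega)]
    exact hh.1 k h1 h2
  · intro k h1 h2
    rw [h k h1 (by omega), h (k+2) (by omega) (by omega)]
    exact hh.2 k h1 h2

/-- The key pinning lemma: pinning coordinate `j` by a condition with `s` allowed values. -/
lemma pin_count [NeZero q] (j : Fin n) (P : (Fin n → Fin q) → Prop)
    (Q : (Fin n → Fin q) → Fin q → Prop) (s : ℕ)
    (hP : ∀ x c, P (Function.update x j c) ↔ P x)
    (hQ : ∀ x c d, Q (Function.update x j c) d ↔ Q x d)
    (hs : ∀ x, P x → cnt (fun d => Q x d) = s) :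
    cnt (fun x => P x ∧ Q x (x j)) * q = cnt P * s := by
  classical
  rw [cnt_eq, cnt_eq]
  have hs' : ∀ x, P x → (univ.filter fun d => Q x d).card = s := by
    intro x hx
    rw [← cnt_eq]
    exact hs x hx
  have lhs : (univ.filter fun x => P x ∧ Q x (x j)).card * q
      = ((univ.filter fun x => P x ∧ Q x (x j)) ×ˢ (univ : Finset (Fin q))).card := by
    rw [Finset.card_product, Finset.card_univ, Fintype.card_fin]
  have rhs : (univ.filter P).card * s
      = ((univ.filter P).sigma fun y => univ.filter fun d => Q y d).card := by
    rw [Finset.card_sigma]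
    rw [Finset.sum_congr rfl fun y hy => hs' y (Finset.mem_filter.mp hy).2]
    rw [Finset.sum_const, smul_eq_mul]
  rw [lhs, rhs]
  refine Finset.card_nbij' (fun xc => ⟨Function.update xc.1 j xc.2, xc.1 j⟩)
    (fun yd => (Function.update yd.1 j yd.2, yd.1 j)) ?_ ?_ ?_ ?_
  · rintro ⟨x, c⟩ hx
    simp only [Finset.mem_coe, Finset.mem_product, Finset.mem_filter, Finset.mem_univ, true_and] at hx
    simp only [Finset.mem_coe, Finset.mem_sigma, Finset.mem_filter, Finset.mem_univ, true_and]
    exact ⟨(hP x c).mpr hx.1.1, (hQ x c _).mpr hx.1.2⟩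
  · rintro ⟨y, d⟩ hy
    simp only [Finset.mem_coe, Finset.mem_sigma, Finset.mem_filter, Finset.mem_univ, true_and] at hy
    simp only [Finset.mem_coe, Finset.mem_product, Finset.mem_filter, Finset.mem_univ, true_and, and_true]
    refine ⟨(hP y d).mpr hy.1, ?_⟩
    rw [Function.update_self]
    exact (hQ y d d).mpr hy.2
  · rintro ⟨x, c⟩ hx
    simp [Function.update_idem, Function.update_self, Function.update_eq_self]
  · rintro ⟨y, d⟩ hy
    simp [Function.update_idem, Function.update_self, Function.update_eq_self]

lemma cnt_ne_fixed {b c : Fin q} (hbc : b ≠ c) :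
    cnt (fun d : Fin q => b ≠ d ∧ c ≠ d) = q - 2 := by
  classical
  rw [cnt_eq]
  have hset : (univ.filter fun d : Fin q => b ≠ d ∧ c ≠ d)
      = (univ.erase b).erase c := by
    ext d
    simp only [Finset.mem_filter, Finset.mem_univ, true_and, Finset.mem_erase]
    constructor
    · rintro ⟨h1, h2⟩; exact ⟨fun hh => h2 hh.symm, fun hh => h1 hh.symm, trivial⟩
    · rintro ⟨h1, h2, -⟩; exact ⟨fun hh => h2 hh.symm, fun hh => h1 hh.symm⟩
  rw [hset, Finset.card_erase_of_mem (Finset.mem_erase.mpr ⟨hbc.symm, Finset.mem_univ _⟩),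
    Finset.card_erase_of_mem (Finset.mem_univ _), Finset.card_univ, Fintype.card_fin]
  omega

lemma cnt_ne_one {b : Fin q} : cnt (fun d : Fin q => b ≠ d) = q - 1 := by
  classical
  rw [cnt_eq, Finset.filter_ne, Finset.card_erase_of_mem (Finset.mem_univ _),
    Finset.card_univ, Fintype.card_fin]

lemma cnt_eq_one {b : Fin q} : cnt (fun d : Fin q => d = b) = 1 := by
  classical
  rw [cnt_eq, Finset.filter_eq', if_pos (Finset.mem_univ _), Finset.card_singleton]

lemma count_ne [NeZero q] {a : ℕ} (ha0 : 0 < a) (ha : a < n) :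
    cnt (fun x : Fin n → Fin q => extF x (a - 1) ≠ extF x a) * q = q ^ n * (q - 1) := by
  have step : cnt (fun x : Fin n → Fin q => True ∧ extF x (a - 1) ≠ x ⟨a, ha⟩) * q
      = cnt (fun _ : Fin n → Fin q => True) * (q - 1) :=
    pin_count ⟨a, ha⟩ (fun _ => True)
    (fun x d => extF x (a - 1) ≠ d) (q - 1)
    (fun _ _ => Iff.rfl)
    (fun x c d => by
      show extF (Function.update x _ c) (a - 1) ≠ d ↔ extF x (a - 1) ≠ d
      rw [extF_update_ne x _ c (by show a - 1 ≠ a; omega)])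
    (fun x _ => cnt_ne_one)
  rw [cnt_true] at step
  rw [← step, mul_eq_mul_right_iff]
  left
  refine cnt_congr fun x => ?_
  rw [show x ⟨a, ha⟩ = extF x a from (extF_at x ⟨a, ha⟩).symm]
  simp

lemma count_ov [NeZero q] {a : ℕ} (ha0 : 0 < a) (ha : a + 1 < n) :
    cnt (fun x : Fin n → Fin q => Ov (extF x) n a) * q * q = q ^ n * (q - 1) * (q - 2) := by
  have han : a < n := by omega
  have step : cnt (fun x : Fin n → Fin q => (extF x (a - 1) ≠ extF x a)
        ∧ (extF x a ≠ x ⟨a + 1, ha⟩ ∧ extF x (a - 1) ≠ x ⟨a + 1, ha⟩)) * q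
      = cnt (fun x : Fin n → Fin q => extF x (a - 1) ≠ extF x a) * (q - 2) :=
    pin_count ⟨a + 1, ha⟩
    (fun x => extF x (a - 1) ≠ extF x a)
    (fun x d => extF x a ≠ d ∧ extF x (a - 1) ≠ d) (q - 2)
    (fun x c => by
      show extF (Function.update x _ c) (a - 1) ≠ extF (Function.update x _ c) a
        ↔ extF x (a - 1) ≠ extF x a
      rw [extF_update_ne x _ c (by show a - 1 ≠ a + 1; omega),
        extF_update_ne x _ c (by show a ≠ a + 1; omega)])
    (fun x c d => by
      show extF (Function.update x _ c) a ≠ d ∧ extF (Function.update x _ c) (a - 1) ≠ d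
        ↔ extF x a ≠ d ∧ extF x (a - 1) ≠ d
      rw [extF_update_ne x _ c (by show a ≠ a + 1; omega),
        extF_update_ne x _ c (by show a - 1 ≠ a + 1; omega)])
    (fun x hx => cnt_ne_fixed hx.symm)
  have hcongr : cnt (fun x : Fin n → Fin q => Ov (extF x) n a)
      = cnt (fun x : Fin n → Fin q => (extF x (a - 1) ≠ extF x a)
        ∧ (extF x a ≠ x ⟨a + 1, ha⟩ ∧ extF x (a - 1) ≠ x ⟨a + 1, ha⟩)) := by
    refine cnt_congr fun x => ?_
    rw [show x ⟨a + 1, ha⟩ = extF x (a + 1) from (extF_at x ⟨a + 1, ha⟩).symm]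
    unfold Ov
    constructor
    · rintro ⟨-, -, h1, h2, h3⟩; exact ⟨h1, h2, h3⟩
    · rintro ⟨h1, h2, h3⟩; exact ⟨ha0, ha, h1, h2, h3⟩
  rw [hcongr, step, mul_right_comm, count_ne ha0 han]

lemma count_alt [NeZero q] : ∀ v u : ℕ, u < v → v < n →
    cnt (fun x : Fin n → Fin q => Alt (extF x) u v) * q ^ (v - u) = q ^ n * (q - 1) := by
  intro v
  induction v with
  | zero => omega
  | succ v ih =>
    intro u hu hv
    rcases Nat.eq_or_lt_of_le hu with he | he
    · -- base: u = v
      obtain rfl : u = v := by omega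
      have hsub : u + 1 - u = 1 := by omega
      have hcongr : cnt (fun x : Fin n → Fin q => Alt (extF x) u (u + 1))
          = cnt (fun x : Fin n → Fin q => True ∧ extF x u ≠ x ⟨u + 1, hv⟩) := by
        refine cnt_congr fun x => ?_
        rw [show x ⟨u + 1, hv⟩ = extF x (u + 1) from (extF_at x ⟨u + 1, hv⟩).symm]
        constructor
        · intro h; exact ⟨trivial, h.1 u le_rfl (by omega)⟩
        · intro h; exact alt_adj h.2
      have step : cnt (fun x : Fin n → Fin q => True ∧ extF x u ≠ x ⟨u + 1, hv⟩) * q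
          = cnt (fun _ : Fin n → Fin q => True) * (q - 1) :=
        pin_count ⟨u + 1, hv⟩ (fun _ => True)
        (fun x d => extF x u ≠ d) (q - 1)
        (fun _ _ => Iff.rfl)
        (fun x c d => by
          show extF (Function.update x _ c) u ≠ d ↔ extF x u ≠ d
          rw [extF_update_ne x _ c (Nat.lt_succ_self u).ne])
        (fun x _ => cnt_ne_one)
      rw [cnt_true] at step
      rw [hcongr, hsub, pow_one, step]
    · -- step: u < v
      have hvv : v < n := by omega
      have huv : u < v := by omega
      have hsub : v + 1 - u = (v - u) + 1 := by omega
      have hcongr : cnt (fun x : Fin n → Fin q => Alt (extF x) u (v + 1))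
          = cnt (fun x : Fin n → Fin q =>
              Alt (extF x) u v ∧ x ⟨v + 1, hv⟩ = extF x (v - 1)) := by
        refine cnt_congr fun x => ?_
        rw [show x ⟨v + 1, hv⟩ = extF x (v + 1) from (extF_at x ⟨v + 1, hv⟩).symm]
        constructor
        · intro h
          refine ⟨h.mono le_rfl (by omega), ?_⟩
          have := h.2 (v - 1) (by omega) (by omega)
          rw [show v - 1 + 2 = v + 1 by omega] at this
          exact this.symm
        · rintro ⟨h1, h2⟩
          constructor
          · intro k hk hk'
            rcases Nat.lt_or_ge k v with hkv | hkv
            · exact h1.1 k hk hkv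
            · obtain rfl : k = v := by omega
              rw [h2]
              have := h1.1 (k - 1) (by omega) (by omega)
              rw [show k - 1 + 1 = k by omega] at this
              exact fun hc => this hc.symm
          · intro k hk hk'
            rcases Nat.lt_or_ge (k + 2) (v + 1) with hkv | hkv
            · exact h1.2 k hk (by omega)
            · obtain rfl : k = v - 1 := by omega
              rw [show v - 1 + 2 = v + 1 by omega, h2]
      have step : cnt (fun x : Fin n → Fin q =>
            Alt (extF x) u v ∧ x ⟨v + 1, hv⟩ = extF x (v - 1)) * q
          = cnt (fun x : Fin n → Fin q => Alt (extF x) u v) * 1 :=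
        pin_count ⟨v + 1, hv⟩
        (fun x => Alt (extF x) u v)
        (fun x d => d = extF x (v - 1)) 1
        (fun x c => by
          show Alt (extF (Function.update x _ c)) u v ↔ Alt (extF x) u v
          refine alt_congr fun k h1 h2 => ?_
          exact extF_update_ne x _ c (Nat.lt_succ_of_le h2).ne)
        (fun x c d => by
          show d = extF (Function.update x _ c) (v - 1) ↔ d = extF x (v - 1)
          rw [extF_update_ne x _ c (Nat.lt_succ_of_le (Nat.sub_le v 1)).ne])
        (fun x _ => cnt_eq_one)
      rw [hcongr, hsub, pow_succ]
      have hre : cnt (fun x : Fin n → Fin q =>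
            Alt (extF x) u v ∧ x ⟨v + 1, hv⟩ = extF x (v - 1)) * (q ^ (v - u) * q)
          = (cnt (fun x : Fin n → Fin q =>
            Alt (extF x) u v ∧ x ⟨v + 1, hv⟩ = extF x (v - 1)) * q) * q ^ (v - u) := by
        ring
      rw [hre, step, mul_one]
      exact ih u huv hvv

end SegAux
namespace SegAux

open Finset

variable {q n : ℕ}

lemma cnt_zero {β : Type*} [Fintype β] {P : β → Prop} (h : ∀ x, ¬ P x) : cnt P = 0 := by
  classical
  rw [cnt_eq, Finset.card_eq_zero, Finset.filter_eq_empty_iff]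
  exact fun x _ => h x

lemma cnt_cast {β : Type*} [Fintype β] (P : β → Prop) [DecidablePred P] :
    (cnt P : ℚ) = ∑ x, if P x then (1 : ℚ) else 0 := by
  rw [cnt_eq, Finset.card_filter]
  push_cast
  rfl

lemma count_ov' [NeZero q] (hq : 2 ≤ q) {a : ℕ} (ha0 : 0 < a) (ha : a + 1 < n) :
    cnt (fun x : Fin n → Fin q => Ov (extF x) n a) = (q - 1) * (q - 2) * q ^ (n - 2) := by
  have hq0 : 0 < q := by omega
  have e1 : cnt (fun x : Fin n → Fin q => Ov (extF x) n a) * q * q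
      = ((q - 1) * (q - 2) * q ^ (n - 2)) * q * q := by
    rw [count_ov ha0 ha]
    have hp : q ^ n = q ^ (n - 2) * q ^ 2 := by
      rw [← pow_add]
      congr 1
      omega
    rw [hp]; ring
  exact Nat.eq_of_mul_eq_mul_right hq0 (Nat.eq_of_mul_eq_mul_right hq0 e1)

lemma count_alt' [NeZero q] {u v : ℕ} (hu : u < v) (hv : v < n) :
    cnt (fun x : Fin n → Fin q => Alt (extF x) u v) = (q - 1) * q ^ (n - (v - u)) := by
  have hq0 : 0 < q ^ (v - u) := Nat.pow_pos (NeZero.pos q)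
  refine Nat.eq_of_mul_eq_mul_right hq0 ?_
  rw [count_alt v u hu hv, mul_assoc, ← pow_add]
  have : n - (v - u) + (v - u) = n := by omega
  rw [this, mul_comm (q ^ n)]

lemma geom2 (y : ℚ) (m : ℕ) : (y - 1) ^ 2 * ∑ d ∈ Finset.Icc 1 m, (d : ℚ) * y ^ d
    = m * y ^ (m + 2) - (m + 1) * y ^ (m + 1) + y := by
  induction m with
  | zero => simp
  | succ m ih =>
    rw [Finset.sum_Icc_succ_top (by omega), mul_add]
    push_cast
    push_cast at ih
    linear_combination ih

lemma sum_reflect (g : ℕ → ℚ) (n : ℕ) :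
    ∑ d ∈ Finset.Icc 1 (n - 1), g (n - d) = ∑ m ∈ Finset.Icc 1 (n - 1), g m := by
  refine Finset.sum_nbij' (fun d => n - d) (fun m => n - m) ?_ ?_ ?_ ?_ ?_
  · intro d hd
    simp only [Finset.mem_Icc] at hd ⊢
    omega
  · intro m hm
    simp only [Finset.mem_Icc] at hm ⊢
    omega
  · intro d hd
    simp only [Finset.mem_Icc] at hd
    show n - (n - d) = d
    omega
  · intro m hm
    simp only [Finset.mem_Icc] at hm
    show n - (n - m) = m
    omega
  · intro d hd
    rfl

lemma sum_pairs (g : ℕ → ℚ) :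
    ∑ p ∈ (Finset.range n ×ˢ Finset.range n).filter (fun p => p.1 < p.2), g (p.2 - p.1)
      = ∑ d ∈ Finset.Icc 1 (n - 1), ((n - d : ℕ) : ℚ) * g d := by
  have h1 : ∑ p ∈ (Finset.range n ×ˢ Finset.range n).filter (fun p => p.1 < p.2), g (p.2 - p.1)
      = ∑ x ∈ (Finset.Icc 1 (n - 1)).sigma (fun d => Finset.range (n - d)), g x.1 := by
    refine Finset.sum_nbij' (fun p => ⟨p.2 - p.1, p.1⟩) (fun x => (x.2, x.2 + x.1)) ?_ ?_ ?_ ?_ ?_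
    · intro p hp
      simp only [Finset.mem_filter, Finset.mem_product, Finset.mem_range, Finset.mem_sigma,
        Finset.mem_Icc] at hp ⊢
      omega
    · intro x hx
      simp only [Finset.mem_filter, Finset.mem_product, Finset.mem_range, Finset.mem_sigma,
        Finset.mem_Icc] at hx ⊢
      omega
    · intro p hp
      simp only [Finset.mem_filter, Finset.mem_product, Finset.mem_range] at hp
      show (p.1, p.1 + (p.2 - p.1)) = p
      exact Prod.ext rfl (by omega)
    · intro x hx
      simp only [Finset.mem_sigma, Finset.mem_Icc, Finset.mem_range] at hx
      simp [Nat.add_sub_cancel_left]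
    · intro p hp
      rfl
  rw [h1, Finset.sum_sigma]
  refine Finset.sum_congr rfl fun d hd => ?_
  have hc : ∀ s ∈ Finset.range (n - d), g (⟨d, s⟩ : Σ _ : ℕ, ℕ).1 = g d := fun _ _ => rfl
  rw [Finset.sum_congr rfl hc, Finset.sum_const, Finset.card_range, nsmul_eq_mul]

end SegAux
open SegAux in
/-- The expected sum of squared lengths of the maximal alternating
segments of a uniform `x ∈ Z_q^n` is
`n(4q²-3q+2)/q² + (6q-4)/q² - 4 - (2/(q-1))(1 - 1/q^{n-1})`. -/
theorem expected_segLenSqSum (q n : ℕ) (hq : 2 ≤ q) (hn : 2 ≤ n) :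
    (∑ x : Fin n → Fin q, (segLenSqSum (List.ofFn x) : ℚ)) / (q : ℚ) ^ n =
      (n : ℚ) * (4 * (q : ℚ) ^ 2 - 3 * q + 2) / (q : ℚ) ^ 2
        + (6 * (q : ℚ) - 4) / (q : ℚ) ^ 2 - 4
        - (2 / ((q : ℚ) - 1)) * (1 - 1 / (q : ℚ) ^ (n - 1)) := by
  classical
  haveI : NeZero q := ⟨by omega⟩
  have hq0 : (q : ℚ) ≠ 0 := Nat.cast_ne_zero.mpr (by omega)
  have hq1 : (q : ℚ) - 1 ≠ 0 := by
    have h1 : (1 : ℚ) < (q : ℚ) := by exact_mod_cast hq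
    exact sub_ne_zero.mpr (ne_of_gt h1)
  have key : ∀ x : Fin n → Fin q, (segLenSqSum (List.ofFn x) : ℚ)
      = (n : ℚ)
        + (∑ a ∈ Finset.range n, if Ov (extF x) n a then (1 : ℚ) else 0)
        + 2 * ∑ p ∈ Finset.range n ×ˢ Finset.range n,
            if p.1 < p.2 ∧ Alt (extF x) p.1 p.2 then (1 : ℚ) else 0 := by
    intro x
    have h := segLenSqSum_eq (extF_ofFn x)
    rw [List.length_ofFn] at h
    rw [h, Finset.card_filter, Finset.card_filter]
    push_cast
    ring
  have hsum : (∑ x : Fin n → Fin q, (segLenSqSum (List.ofFn x) : ℚ))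
      = (n : ℚ) * (q : ℚ) ^ n
        + (∑ a ∈ Finset.range n, (cnt (fun x : Fin n → Fin q => Ov (extF x) n a) : ℚ))
        + 2 * ∑ p ∈ Finset.range n ×ˢ Finset.range n,
            (cnt (fun x : Fin n → Fin q => p.1 < p.2 ∧ Alt (extF x) p.1 p.2) : ℚ) := by
    rw [Finset.sum_congr rfl fun x _ => key x]
    rw [Finset.sum_add_distrib, Finset.sum_add_distrib]
    congr 1
    · congr 1
      · rw [Finset.sum_const, card_univ_fun, nsmul_eq_mul]
        push_cast
        ring
      · rw [Finset.sum_comm]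
        exact Finset.sum_congr rfl fun a _ => (cnt_cast _).symm
    · rw [← Finset.mul_sum, Finset.sum_comm]
      congr 1
      exact Finset.sum_congr rfl fun p _ => (cnt_cast _).symm
  have hOv : (∑ a ∈ Finset.range n, (cnt (fun x : Fin n → Fin q => Ov (extF x) n a) : ℚ))
      = ((n : ℚ) - 2) * (((q : ℚ) - 1) * ((q : ℚ) - 2) * (q : ℚ) ^ (n - 2)) := by
    have hval : ∀ a ∈ Finset.range n, (cnt (fun x : Fin n → Fin q => Ov (extF x) n a) : ℚ)
        = if 0 < a ∧ a + 1 < n then ((q : ℚ) - 1) * ((q : ℚ) - 2) * (q : ℚ) ^ (n - 2) else 0 := by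
      intro a _
      split
      · next h =>
        rw [count_ov' hq h.1 h.2]
        rw [Nat.cast_mul, Nat.cast_mul, Nat.cast_pow,
          Nat.cast_sub (by omega : 1 ≤ q), Nat.cast_sub (by omega : 2 ≤ q)]
        push_cast
        ring
      · next h =>
        rw [cnt_zero fun x hO => h ⟨hO.1, hO.2.1⟩, Nat.cast_zero]
    rw [Finset.sum_congr rfl hval, ← Finset.sum_filter, Finset.sum_const]
    have hcard : ((Finset.range n).filter fun a => 0 < a ∧ a + 1 < n).card = n - 2 := by
      have hset : ((Finset.range n).filter fun a => 0 < a ∧ a + 1 < n) = Finset.Ioo 0 (n - 1) := by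
        ext a
        simp only [Finset.mem_filter, Finset.mem_range, Finset.mem_Ioo]
        omega
      rw [hset, Nat.card_Ioo]
      omega
    rw [hcard, nsmul_eq_mul, Nat.cast_sub hn]
    push_cast
    ring
  have hAlt : (∑ p ∈ Finset.range n ×ˢ Finset.range n,
        (cnt (fun x : Fin n → Fin q => p.1 < p.2 ∧ Alt (extF x) p.1 p.2) : ℚ))
      = ((q : ℚ) - 1) * ∑ m ∈ Finset.Icc 1 (n - 1), (m : ℚ) * (q : ℚ) ^ m := by
    have hval : ∀ p ∈ Finset.range n ×ˢ Finset.range n,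
        (cnt (fun x : Fin n → Fin q => p.1 < p.2 ∧ Alt (extF x) p.1 p.2) : ℚ)
        = if p.1 < p.2 then ((q : ℚ) - 1) * (q : ℚ) ^ (n - (p.2 - p.1)) else 0 := by
      intro p hp
      simp only [Finset.mem_product, Finset.mem_range] at hp
      split
      · next h =>
        have hcc : cnt (fun x : Fin n → Fin q => p.1 < p.2 ∧ Alt (extF x) p.1 p.2)
            = cnt (fun x : Fin n → Fin q => Alt (extF x) p.1 p.2) :=
          cnt_congr fun x => ⟨fun hh => hh.2, fun hh => ⟨h, hh⟩⟩
        rw [hcc, count_alt' h hp.2]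
        rw [Nat.cast_mul, Nat.cast_pow, Nat.cast_sub (by omega : 1 ≤ q)]
        push_cast
        ring
      · next h =>
        rw [cnt_zero fun x hO => h hO.1, Nat.cast_zero]
    rw [Finset.sum_congr rfl hval, ← Finset.sum_filter]
    rw [sum_pairs (fun d => ((q : ℚ) - 1) * (q : ℚ) ^ (n - d))]
    rw [show (∑ d ∈ Finset.Icc 1 (n - 1),
        ((n - d : ℕ) : ℚ) * (((q : ℚ) - 1) * (q : ℚ) ^ (n - d)))
      = ∑ d ∈ Finset.Icc 1 (n - 1),
        (fun t => ((t : ℕ) : ℚ) * (((q : ℚ) - 1) * (q : ℚ) ^ t)) (n - d) from rfl]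
    rw [sum_reflect (fun t => ((t : ℕ) : ℚ) * (((q : ℚ) - 1) * (q : ℚ) ^ t)) n]
    rw [Finset.mul_sum]
    exact Finset.sum_congr rfl fun m _ => by ring
  rw [hsum, hOv, hAlt]
  obtain ⟨N, rfl⟩ : ∃ N, n = N + 2 := ⟨n - 2, by omega⟩
  have e1 : N + 2 - 2 = N := by omega
  have e2 : N + 2 - 1 = N + 1 := by omega
  rw [e1, e2]
  have hB : (∑ m ∈ Finset.Icc 1 (N + 1), (m : ℚ) * (q : ℚ) ^ m)
      = (((N : ℚ) + 1) * (q : ℚ) ^ (N + 3) - ((N : ℚ) + 2) * (q : ℚ) ^ (N + 2) + (q : ℚ))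
        / ((q : ℚ) - 1) ^ 2 := by
    rw [eq_div_iff (pow_ne_zero 2 hq1)]
    have hg := geom2 (q : ℚ) (N + 1)
    push_cast at hg
    rw [mul_comm]
    rw [hg]
    ring
  rw [hB]
  push_cast
  field_simp
  ring
end

section
/- Let n > 1 be an integer. Every anticode of diameter one in Z_2^n has size at most n + 1, and the set { a ∈ Z_2^n : wt(a) ≤ 1 } of words of Hamming weight at most one is an anticode of diameter one of size exactly n + 1; hence the maximum size of a maximal anticode of diameter one in Z_2^n is n + 1. -/
open scoped Classical

/-- weighted sum: position i (0-indexed) has weight (length − i). -/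
def wsum : List (Fin 2) → ℕ
  | [] => 0
  | a :: t => a.val * (t.length + 1) + wsum t

/-- number of ones -/
def onesL (l : List (Fin 2)) : ℕ := (l.map Fin.val).sum

@[simp] lemma onesL_nil : onesL [] = 0 := rfl
@[simp] lemma onesL_cons (a : Fin 2) (t : List (Fin 2)) : onesL (a :: t) = a.val + onesL t := rfl

lemma onesL_append (l₁ l₂ : List (Fin 2)) : onesL (l₁ ++ l₂) = onesL l₁ + onesL l₂ := by
  simp [onesL]

lemma onesL_le_length (l : List (Fin 2)) : onesL l ≤ l.length := by
  induction l with
  | nil => simp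
  | cons a t ih => simp only [onesL_cons, List.length_cons]; have := a.isLt; omega

/-- Lipschitz facts for ones of prefixes -/
lemma onesL_take_mono (z : List (Fin 2)) {k k' : ℕ} (h : k ≤ k') :
    onesL (z.take k) ≤ onesL (z.take k') ∧
      onesL (z.take k') ≤ onesL (z.take k) + (k' - k) := by
  have h1 : z.take k' = z.take k ++ (z.drop k).take (k' - k) := by
    rw [← List.take_add]; congr 1; omega
  rw [h1, onesL_append]
  have h2 := onesL_le_length ((z.drop k).take (k' - k))
  have h3 : ((z.drop k).take (k' - k)).length ≤ k' - k := by
    simp [List.length_take]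
  omega

/-- a sublist one shorter: the longer list is an insertion -/
lemma sublist_length_succ {α : Type*} {z X : List α} (h : z.Sublist X)
    (hl : X.length = z.length + 1) :
    ∃ k b, k ≤ z.length ∧ X = z.take k ++ b :: z.drop k := by
  induction h with
  | slnil => simp at hl
  | @cons l₁ l₂ a h ih =>
      have : l₁ = l₂ := h.eq_of_length (by simp at hl; omega)
      subst this
      exact ⟨0, a, Nat.zero_le _, by simp⟩
  | @cons_cons l₁ l₂ a h ih =>
      obtain ⟨k, b, hk, hX⟩ := ih (by simpa using hl)
      exact ⟨k + 1, b, by simpa using Nat.succ_le_succ hk, by simp [hX]⟩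

lemma wsum_insert (z : List (Fin 2)) (k : ℕ) (b : Fin 2) (hk : k ≤ z.length) :
    wsum (z.take k ++ b :: z.drop k) =
      wsum z + onesL (z.take k) + (z.length + 1 - k) * b.val := by
  induction z generalizing k with
  | nil =>
      have : k = 0 := by simpa using hk
      subst this
      simp [wsum]
  | cons c t ih =>
      cases k with
      | zero =>
          show wsum (b :: c :: t) = wsum (c :: t) + onesL [] + ((c :: t).length + 1 - 0) * b.val
          show b.val * ((c :: t).length + 1) + wsum (c :: t) = _
          simp [Nat.mul_comm, Nat.add_comm]
      | succ k =>
          have hk' : k ≤ t.length := by simpa using hk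
          have e1 : (c :: t).take (k+1) ++ b :: (c :: t).drop (k+1)
              = c :: (t.take k ++ b :: t.drop k) := by simp
          rw [e1]
          show c.val * ((t.take k ++ b :: t.drop k).length + 1)
              + wsum (t.take k ++ b :: t.drop k) = _
          rw [ih k hk']
          have hlen : (t.take k ++ b :: t.drop k).length = t.length + 1 := by
            simp [List.length_take, List.length_drop]; omega
          rw [hlen]
          have e2 : (c :: t).length + 1 - (k + 1) = t.length + 1 - k := by
            simp [List.length_cons]
          rw [e2]
          show c.val * (t.length + 1 + 1) + (wsum t + onesL (t.take k) + (t.length + 1 - k) * b.val)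
              = c.val * (t.length + 1) + wsum t + (c.val + onesL (t.take k)) + (t.length + 1 - k) * b.val
          ring

/-- count of entries different from `b` -/
def nbL (b : Fin 2) (l : List (Fin 2)) : ℕ := (l.map (fun a => if a = b then 0 else 1)).sum

@[simp] lemma nbL_nil (b : Fin 2) : nbL b [] = 0 := rfl
@[simp] lemma nbL_cons (b a : Fin 2) (t : List (Fin 2)) :
    nbL b (a :: t) = (if a = b then 0 else 1) + nbL b t := rfl

lemma fin2_cases (v : Fin 2) : v = 0 ∨ v = 1 := by
  fin_cases v
  · exact Or.inl rfl
  · exact Or.inr rfl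

lemma nbL_zero_eq_onesL (l : List (Fin 2)) : nbL 0 l = onesL l := by
  induction l with
  | nil => rfl
  | cons a t ih =>
      rcases fin2_cases a with h | h <;> subst h <;> simp [ih]

lemma nbL_one_add_onesL (l : List (Fin 2)) : nbL 1 l + onesL l = l.length := by
  induction l with
  | nil => rfl
  | cons a t ih =>
      rcases fin2_cases a with h | h <;> subst h <;>
        simp only [nbL_cons, onesL_cons, List.length_cons] <;> simp <;> omega

lemma insert_eq_of_nb_le (b : Fin 2) (z : List (Fin 2)) :
    ∀ k k', k ≤ k' → k' ≤ z.length → nbL b (z.take k) = nbL b (z.take k') →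
      z.take k ++ b :: z.drop k = z.take k' ++ b :: z.drop k' := by
  induction z with
  | nil =>
      intro k k' h1 h2 _
      have hk' : k' = 0 := by simpa using h2
      have hk : k = 0 := by omega
      subst hk'; subst hk; rfl
  | cons c t ih =>
      intro k k' h1 h2 hnb
      cases k' with
      | zero => interval_cases k; rfl
      | succ j =>
          cases k with
          | zero =>
              have hc : c = b ∧ nbL b (t.take j) = 0 := by
                simp only [List.take_succ_cons, nbL_cons, List.take_zero, nbL_nil] at hnb
                by_cases h : c = b
                · simp [h] at hnb; exact ⟨h, hnb.symm⟩
                · simp [h] at hnb; omega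
              obtain ⟨rfl, hnb0⟩ := hc
              have := ih 0 j (Nat.zero_le _) (by simpa using h2) (by simpa using hnb0.symm)
              simp only [List.take_zero, List.drop_zero, List.nil_append] at this ⊢
              rw [List.take_succ_cons, List.drop_succ_cons]
              simp [← this]
          | succ i =>
              have := ih i j (by omega) (by simpa using h2)
                (by simpa using (by simpa [nbL_cons] using hnb : (if c = b then 0 else 1) + nbL b (t.take i) = (if c = b then 0 else 1) + nbL b (t.take j)))
              simp [List.take_succ_cons, List.drop_succ_cons, this]

lemma insert_eq_of_nb (b : Fin 2) (z : List (Fin 2)) (k k' : ℕ)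
    (hk : k ≤ z.length) (hk' : k' ≤ z.length)
    (h : nbL b (z.take k) = nbL b (z.take k')) :
    z.take k ++ b :: z.drop k = z.take k' ++ b :: z.drop k' := by
  rcases le_total k k' with hle | hle
  · exact insert_eq_of_nb_le b z k k' hle hk' h
  · exact (insert_eq_of_nb_le b z k' k hle hk h.symm).symm


/-- weighted sum of a word -/
noncomputable def Gf {n : ℕ} (x : Fin n → Fin 2) : ℕ := wsum (List.ofFn x)

lemma onesL_take_le (z : List (Fin 2)) (k : ℕ) : onesL (z.take k) ≤ k := by
  have h := onesL_le_length (z.take k)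
  have : (z.take k).length ≤ k := by simp [List.length_take]
  omega

lemma pair_key {n : ℕ} (x y : Fin n → Fin 2) (hn : 1 ≤ n) (h : fllDist x y ≤ 1) :
    (Gf x = Gf y → x = y) ∧ Gf x ≤ Gf y + n ∧ Gf y ≤ Gf x + n := by
  classical
  set X := List.ofFn x with hX
  set Y := List.ofFn y with hY
  have hXlen : X.length = n := by simp [hX]
  have hYlen : Y.length = n := by simp [hY]
  set S : Set ℕ := {k | ∃ z : List (Fin 2), z.Sublist X ∧ z.Sublist Y ∧ z.length = k} with hS
  have hne : S.Nonempty := ⟨0, ⟨[], List.nil_sublist _, List.nil_sublist _, rfl⟩⟩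
  have hbdd : BddAbove S := by
    refine ⟨n, fun k hk => ?_⟩
    obtain ⟨z, hz1, _, hz3⟩ := hk
    have := hz1.length_le
    omega
  have hmem : sSup S ∈ S := Nat.sSup_mem hne hbdd
  have hsup_le : sSup S ≤ n := by
    obtain ⟨z, hz1, _, hz3⟩ := hmem
    have := hz1.length_le
    omega
  have hsup_ge : n - 1 ≤ sSup S := by
    have : fllDist x y = n - sSup S := rfl
    omega
  obtain ⟨z, hzX, hzY, hzlen⟩ := hmem
  by_cases hfull : z.length = n
  · -- z = X = Y
    have e1 : z = X := hzX.eq_of_length (by omega)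
    have e2 : z = Y := hzY.eq_of_length (by omega)
    have exy : x = y := List.ofFn_injective (by rw [← hX, ← hY, ← e1, ← e2])
    subst exy
    exact ⟨fun _ => rfl, by omega, by omega⟩
  · have hzlen' : z.length = n - 1 := by omega
    obtain ⟨k, a, hk, hXeq⟩ := sublist_length_succ hzX (by omega)
    obtain ⟨k', b, hk', hYeq⟩ := sublist_length_succ hzY (by omega)
    have hGx : Gf x = wsum z + onesL (z.take k) + (z.length + 1 - k) * a.val := by
      rw [Gf, ← hX, hXeq]; exact wsum_insert z k a hk
    have hGy : Gf y = wsum z + onesL (z.take k') + (z.length + 1 - k') * b.val := by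
      rw [Gf, ← hY, hYeq]; exact wsum_insert z k' b hk'
    have hok : onesL (z.take k) ≤ k := onesL_take_le z k
    have hok' : onesL (z.take k') ≤ k' := onesL_take_le z k'
    have hbx : onesL (z.take k) + (z.length + 1 - k) * a.val ≤ n := by
      rcases fin2_cases a with ha | ha <;> subst ha <;> simp <;> omega
    have hby : onesL (z.take k') + (z.length + 1 - k') * b.val ≤ n := by
      rcases fin2_cases b with hb | hb <;> subst hb <;> simp <;> omega
    refine ⟨?_, by omega, by omega⟩
    intro hG
    have heq : onesL (z.take k) + (z.length + 1 - k) * a.val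
        = onesL (z.take k') + (z.length + 1 - k') * b.val := by omega
    have hmo : (onesL (z.take k) ≤ onesL (z.take k') ∧ onesL (z.take k') ≤ onesL (z.take k) + (k' - k))
        ∨ (onesL (z.take k') ≤ onesL (z.take k) ∧ onesL (z.take k) ≤ onesL (z.take k') + (k - k')) := by
      rcases le_total k k' with hkk | hkk
      · exact Or.inl (onesL_take_mono z hkk)
      · exact Or.inr (onesL_take_mono z hkk)
    have hxy_of : X = Y → x = y := fun hl => List.ofFn_injective (by rw [← hX, ← hY, hl])
    rcases fin2_cases a with ha | ha <;> subst ha <;> rcases fin2_cases b with hb | hb <;> subst hb <;>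
      simp only [Fin.val_zero, Fin.val_one, Nat.mul_zero, Nat.mul_one, Nat.add_zero] at heq
    · -- a = 0, b = 0
      apply hxy_of
      rw [hXeq, hYeq]
      exact insert_eq_of_nb 0 z k k' hk hk'
        (by rw [nbL_zero_eq_onesL, nbL_zero_eq_onesL]; exact heq)
    · -- a = 0, b = 1 : impossible
      omega
    · -- a = 1, b = 0 : impossible
      omega
    · -- a = 1, b = 1
      apply hxy_of
      rw [hXeq, hYeq]
      have n1 : nbL 1 (z.take k) + onesL (z.take k) = k := by
        have := nbL_one_add_onesL (z.take k)
        have hl : (z.take k).length = k := by simp [List.length_take]; omega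
        omega
      have n2 : nbL 1 (z.take k') + onesL (z.take k') = k' := by
        have := nbL_one_add_onesL (z.take k')
        have hl : (z.take k').length = k' := by simp [List.length_take]; omega
        omega
      exact insert_eq_of_nb 1 z k k' hk hk' (by omega)


lemma anticode_card_le {n : ℕ} (hn : 1 ≤ n) (A : Finset (Fin n → Fin 2))
    (hA : IsAnticode1 n A) : A.card ≤ n + 1 := by
  classical
  rcases A.eq_empty_or_nonempty with rfl | hAne
  · simp
  have hinj : Set.InjOn Gf (A : Set (Fin n → Fin 2)) := fun u hu v hv hG =>
    (pair_key u v hn (hA u hu v hv)).1 hG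
  have hcard : (A.image Gf).card = A.card := Finset.card_image_of_injOn hinj
  set B := A.image Gf with hB
  have hBne : B.Nonempty := hAne.image _
  set m := B.min' hBne with hm
  have hsub : B ⊆ Finset.Icc m (m + n) := by
    intro v hv
    rw [Finset.mem_Icc]
    refine ⟨B.min'_le v hv, ?_⟩
    obtain ⟨u, hu, rfl⟩ := Finset.mem_image.mp hv
    have hmB : m ∈ B := B.min'_mem hBne
    obtain ⟨u₁, hu₁, hmu₁⟩ := Finset.mem_image.mp hmB
    have := (pair_key u u₁ hn (hA u hu u₁ hu₁)).2.1
    omega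
  calc A.card = B.card := hcard.symm
    _ ≤ (Finset.Icc m (m + n)).card := Finset.card_le_card hsub
    _ = n + 1 := by rw [Nat.card_Icc]; omega

/-- every binary list has `length - ones` zeros as a sub-replicate -/
lemma replicate_zero_sublist (l : List (Fin 2)) :
    (List.replicate (l.length - onesL l) (0 : Fin 2)).Sublist l := by
  induction l with
  | nil => simp
  | cons a t ih =>
      rcases fin2_cases a with ha | ha <;> subst ha
      · have h1 : (0 :: t).length - onesL (0 :: t) = (t.length - onesL t) + 1 := by
          have := onesL_le_length t
          simp only [onesL_cons, List.length_cons, Fin.val_zero]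
          omega
        rw [h1, List.replicate_succ]
        exact ih.cons₂ 0
      · have h1 : (1 :: t).length - onesL (1 :: t) = t.length - onesL t := by
          simp only [onesL_cons, List.length_cons, Fin.val_one]
          omega
        rw [h1]
        exact ih.cons 1



lemma onesL_ofFn {n : ℕ} (a : Fin n → Fin 2) : onesL (List.ofFn a) = wt a := by
  classical
  rw [onesL, List.map_ofFn, List.sum_ofFn, wt, Finset.card_filter]
  refine Finset.sum_congr rfl fun i _ => ?_
  rcases fin2_cases (a i) with h | h <;> simp [h]

lemma fll_le_one_of_wt {n : ℕ} (hn : 1 ≤ n) (a b : Fin n → Fin 2)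
    (ha : wt a ≤ 1) (hb : wt b ≤ 1) : fllDist a b ≤ 1 := by
  classical
  have key : ∀ c : Fin n → Fin 2, wt c ≤ 1 →
      (List.replicate (n - 1) (0 : Fin 2)).Sublist (List.ofFn c) := by
    intro c hc
    have h1 := replicate_zero_sublist (List.ofFn c)
    rw [List.length_ofFn, onesL_ofFn] at h1
    exact ((List.replicate_sublist_replicate (0 : Fin 2)).mpr (by omega)).trans h1
  have hmem : (n - 1) ∈ {k | ∃ z : List (Fin 2),
      z.Sublist (List.ofFn a) ∧ z.Sublist (List.ofFn b) ∧ z.length = k} :=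
    ⟨List.replicate (n - 1) 0, key a ha, key b hb, by simp⟩
  have hbdd : BddAbove {k | ∃ z : List (Fin 2),
      z.Sublist (List.ofFn a) ∧ z.Sublist (List.ofFn b) ∧ z.length = k} := by
    refine ⟨n, fun k hk => ?_⟩
    obtain ⟨z, hz1, _, hz3⟩ := hk
    have := hz1.length_le
    simp only [List.length_ofFn] at this
    omega
  have := le_csSup hbdd hmem
  show n - lcsLen _ _ ≤ 1
  rw [lcsLen]
  omega

lemma card_wt_le_one {n : ℕ} :
    (Finset.univ.filter fun a : Fin n → Fin 2 => wt a ≤ 1).card = n + 1 := by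
  classical
  set e : Fin n → (Fin n → Fin 2) := fun i j => if j = i then 1 else 0 with he
  have hwt0 : wt (fun _ : Fin n => (0 : Fin 2)) = 0 := by
    rw [wt]; simp
  have hwte : ∀ i, wt (e i) = 1 := by
    intro i
    rw [wt]
    have : (Finset.univ.filter fun j => e i j ≠ 0) = {i} := by
      ext j
      simp only [Finset.mem_filter, Finset.mem_univ, true_and, Finset.mem_singleton, he]
      by_cases h : j = i <;> simp [h]
    rw [this, Finset.card_singleton]
  have hset : (Finset.univ.filter fun a : Fin n → Fin 2 => wt a ≤ 1)
      = insert (fun _ => 0) (Finset.univ.image e) := by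
    ext a
    simp only [Finset.mem_filter, Finset.mem_univ, true_and, Finset.mem_insert,
      Finset.mem_image]
    constructor
    · intro hwt
      interval_cases h : wt a
      · left
        funext j
        have : j ∉ Finset.univ.filter fun i => a i ≠ 0 := by
          rw [Finset.card_eq_zero.mp h]; simp
        simp only [Finset.mem_filter, Finset.mem_univ, true_and, not_not] at this
        exact this
      · right
        obtain ⟨i, hi⟩ := Finset.card_eq_one.mp h
        refine ⟨i, ?_⟩
        funext j
        by_cases hji : j = i
        · subst hji
          have : j ∈ Finset.univ.filter fun i => a i ≠ 0 := by rw [hi]; simp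
          simp only [Finset.mem_filter, Finset.mem_univ, true_and] at this
          rcases fin2_cases (a j) with h0 | h1
          · exact absurd h0 this
          · simp [he, h1]
        · have : j ∉ Finset.univ.filter fun i => a i ≠ 0 := by rw [hi]; simp [hji]
          simp only [Finset.mem_filter, Finset.mem_univ, true_and, not_not] at this
          simp [he, hji, this]
    · rintro (rfl | ⟨i, rfl⟩)
      · rw [hwt0]; omega
      · rw [hwte]
  rw [hset]
  have h0ni : (fun _ : Fin n => (0 : Fin 2)) ∉ Finset.univ.image e := by
    rw [Finset.mem_image]
    rintro ⟨i, _, hi⟩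
    have := congrFun hi i
    simp [he] at this
  rw [Finset.card_insert_of_notMem h0ni, Finset.card_image_of_injective _ ?_, Finset.card_univ,
    Fintype.card_fin]
  intro i j hij
  by_contra hne
  have := congrFun hij i
  simp [he, Ne.symm, hne] at this

/-- For `n > 1`: every anticode of diameter one in `Z_2^n` has size
at most `n + 1`; the set of words of Hamming weight at most one is an anticode of
diameter one of size exactly `n + 1`; hence the maximum size of a maximal anticode of
diameter one is `n + 1`. -/
theorem max_anticode_diameter_one (n : ℕ) (hn : 1 < n) :
    (∀ A : Finset (Fin n → Fin 2), IsAnticode1 n A → A.card ≤ n + 1) ∧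
      IsAnticode1 n (Finset.univ.filter fun a : Fin n → Fin 2 => wt a ≤ 1) ∧
      (Finset.univ.filter fun a : Fin n → Fin 2 => wt a ≤ 1).card = n + 1 ∧
      IsGreatest
        {m | ∃ A : Finset (Fin n → Fin 2), IsMaximalAnticode1 n A ∧ A.card = m}
        (n + 1) := by
  have hn1 : 1 ≤ n := le_of_lt hn
  have part1 : ∀ A : Finset (Fin n → Fin 2), IsAnticode1 n A → A.card ≤ n + 1 :=
    fun A hA => anticode_card_le hn1 A hA
  have part2 : IsAnticode1 n (Finset.univ.filter fun a : Fin n → Fin 2 => wt a ≤ 1) := by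
    intro a ha b hb
    simp only [Finset.mem_filter] at ha hb
    exact fll_le_one_of_wt hn1 a b ha.2 hb.2
  have part3 : (Finset.univ.filter fun a : Fin n → Fin 2 => wt a ≤ 1).card = n + 1 :=
    card_wt_le_one
  refine ⟨part1, part2, part3, ?_, ?_⟩
  · refine ⟨Finset.univ.filter fun a : Fin n → Fin 2 => wt a ≤ 1, ⟨part2, ?_⟩, part3⟩
    intro B hB hsub
    have hBle := part1 B hB
    exact Finset.eq_of_subset_of_card_le hsub (by rw [part3]; omega)
  · rintro m ⟨A, ⟨hA, _⟩, rfl⟩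
    exact part1 A hA
end
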